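/- Let n ≥ 1, let M ≥ 1 be a natural number, let L₁,…,Lₙ > 0, S > 0, t > 0, P > 0, and let 0 < pᵢ ≤ P for i = 1,…,n. Let μ be the product on ℝⁿ of n copies of the Gamma distribution with shape M and rate 1. Then μ{λ ∈ ℝⁿ : ∑_{i=1}^n Lᵢ·log₂(1 + S·λᵢ·pᵢ) < t} ≤ (∏_{i=1}^n (P/pᵢ)^M) · μ{λ ∈ ℝⁿ : ∑_{i=1}^n Lᵢ·log₂(1 + S·λᵢ·P) < t}. -/

import Mathlib

open MeasureTheory ProbabilityTheory Real
open scoped ENNReal NNReal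

/-- Monotonicity of product outer measures / product measures. -/
lemma pi_measure_mono {ι : Type*} [Fintype ι] {α : ι → Type*} [∀ i, MeasurableSpace (α i)]
    {μ ν : ∀ i, Measure (α i)} (h : ∀ i, μ i ≤ ν i) :
    Measure.pi μ ≤ Measure.pi ν := by
  refine Measure.le_iff.2 fun s hs => ?_
  rw [Measure.pi, Measure.pi, toMeasure_apply _ _ hs, toMeasure_apply _ _ hs]
  have : (OuterMeasure.pi fun i => (μ i).toOuterMeasure)
      ≤ OuterMeasure.pi fun i => (ν i).toOuterMeasure := by
    rw [OuterMeasure.pi, OuterMeasure.pi]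
    refine OuterMeasure.le_boundedBy'.2 fun t ht => ?_
    refine (OuterMeasure.boundedBy_le t).trans ?_
    exact Finset.prod_le_prod' fun i _ => h i _
  exact this _

/-- Product of scalar multiples of a probability measure. -/
lemma pi_smul_eq {ι : Type*} [Fintype ι] {α : ι → Type*} [∀ i, MeasurableSpace (α i)]
    (γ : ∀ i, Measure (α i)) [∀ i, IsProbabilityMeasure (γ i)] (K : ι → ℝ≥0∞)
    (hK : ∀ i, K i ≠ ⊤) :
    Measure.pi (fun i => K i • γ i) = (∏ i, K i) • Measure.pi γ := by
  haveI : ∀ i, IsFiniteMeasure (K i • γ i) := fun i => by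
    constructor
    rw [Measure.smul_apply, smul_eq_mul, measure_univ, mul_one]
    exact (hK i).lt_top
  refine Measure.pi_eq fun s hs => ?_
  simp only [Measure.smul_apply, smul_eq_mul, Measure.pi_pi]
  rw [Finset.prod_mul_distrib]

lemma gammaPDF_scale_le (M : ℕ) (hM : 1 ≤ M) {c : ℝ} (hc : 0 < c) (hc1 : c ≤ 1) (y : ℝ) :
    gammaPDF (M : ℝ) 1 (y * c⁻¹) ≤
      ENNReal.ofReal (c⁻¹ ^ ((M : ℝ) - 1)) * gammaPDF (M : ℝ) 1 y := by
  rcases lt_or_ge y 0 with hy | hy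
  · rw [gammaPDF_of_neg (by nlinarith [inv_pos.2 hc] : y * c⁻¹ < 0)]
    exact zero_le
  · have hyc : 0 ≤ y * c⁻¹ := by positivity
    rw [gammaPDF_of_nonneg hyc, gammaPDF_of_nonneg hy, ← ENNReal.ofReal_mul (by positivity)]
    refine ENNReal.ofReal_le_ofReal ?_
    have hM1 : (0:ℝ) ≤ (M : ℝ) - 1 := by
      have : (1:ℝ) ≤ (M : ℝ) := by exact_mod_cast hM
      linarith
    have hΓ : 0 < Real.Gamma (M : ℝ) :=
      Real.Gamma_pos_of_pos (by positivity)
    have h1 : (y * c⁻¹) ^ ((M:ℝ) - 1) = y ^ ((M:ℝ) - 1) * c⁻¹ ^ ((M:ℝ) - 1) :=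
      Real.mul_rpow hy (by positivity)
    have h2 : Real.exp (-(1 * (y * c⁻¹))) ≤ Real.exp (-(1 * y)) := by
      apply Real.exp_le_exp.2
      have h3 : c * (y * c⁻¹) = y := by field_simp
      have h4 := mul_le_mul_of_nonneg_right hc1 hyc
      nlinarith
    calc (1:ℝ) ^ (M:ℝ) / Real.Gamma (M:ℝ) * (y * c⁻¹) ^ ((M:ℝ) - 1)
          * Real.exp (-(1 * (y * c⁻¹)))
        = c⁻¹ ^ ((M:ℝ) - 1) * ((1:ℝ) ^ (M:ℝ) / Real.Gamma (M:ℝ) * y ^ ((M:ℝ) - 1)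
            * Real.exp (-(1 * (y * c⁻¹)))) := by rw [h1]; ring
      _ ≤ c⁻¹ ^ ((M:ℝ) - 1) * ((1:ℝ) ^ (M:ℝ) / Real.Gamma (M:ℝ) * y ^ ((M:ℝ) - 1)
            * Real.exp (-(1 * y))) := by
          have hnn : (0:ℝ) ≤ c⁻¹ ^ ((M:ℝ) - 1) := by positivity
          have hnn2 : (0:ℝ) ≤ (1:ℝ) ^ (M:ℝ) / Real.Gamma (M:ℝ) * y ^ ((M:ℝ) - 1) := by
            have := Real.rpow_nonneg hy ((M:ℝ) - 1)
            positivity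
          exact mul_le_mul_of_nonneg_left (mul_le_mul_of_nonneg_left h2 hnn2) hnn

/-- Key one-dimensional estimate: the pushforward of a `Gamma(M,1)` measure under
scaling by `c ∈ (0,1]` is bounded by `(1/c)^M` times the `Gamma(M,1)` measure. -/
lemma map_mul_gammaMeasure_le (M : ℕ) (hM : 1 ≤ M) {c : ℝ} (hc : 0 < c) (hc1 : c ≤ 1) :
    (gammaMeasure (M : ℝ) 1).map (· * c) ≤
      (ENNReal.ofReal ((1 / c) ^ M)) • gammaMeasure (M : ℝ) 1 := by
  refine Measure.le_iff.2 fun s hs => ?_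
  have hmul : Measurable fun x : ℝ => x * c := measurable_mul_const c
  have hpre : MeasurableSet ((fun x : ℝ => x * c) ⁻¹' s) := hmul hs
  have hpdf : Measurable (gammaPDF (M : ℝ) 1) :=
    (measurable_gammaPDFReal _ _).ennreal_ofReal
  rw [Measure.map_apply hmul hs, gammaMeasure, withDensity_apply _ hpre]
  set F : ℝ → ℝ≥0∞ := fun y => s.indicator (fun y => gammaPDF (M : ℝ) 1 (y * c⁻¹)) y with hF
  have hFmeas : Measurable F :=
    Measurable.indicator (hpdf.comp (measurable_mul_const c⁻¹)) hs
  have hkey : ∀ x : ℝ, ((fun x : ℝ => x * c) ⁻¹' s).indicator (gammaPDF (M : ℝ) 1) x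
      = F (x * c) := by
    intro x
    have hxc : x * c * c⁻¹ = x := by field_simp
    by_cases hx : x * c ∈ s <;>
      simp [hF, Set.indicator, hx, hxc]
  calc ∫⁻ x in (fun x : ℝ => x * c) ⁻¹' s, gammaPDF (M : ℝ) 1 x
      = ∫⁻ x, ((fun x : ℝ => x * c) ⁻¹' s).indicator (gammaPDF (M : ℝ) 1) x :=
        (lintegral_indicator hpre _).symm
    _ = ∫⁻ x, F (x * c) := by simp_rw [hkey]
    _ = ∫⁻ y, F y ∂(Measure.map (· * c) volume) := (lintegral_map hFmeas hmul).symm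
    _ = ENNReal.ofReal |c⁻¹| * ∫⁻ y, F y := by
        rw [Real.map_volume_mul_right hc.ne', lintegral_smul_measure, smul_eq_mul]
    _ = ENNReal.ofReal c⁻¹ * ∫⁻ y in s, gammaPDF (M : ℝ) 1 (y * c⁻¹) := by
        rw [abs_of_pos (inv_pos.2 hc)]
        simp only [hF]
        rw [lintegral_indicator hs _]
    _ ≤ ENNReal.ofReal c⁻¹ *
        ∫⁻ y in s, ENNReal.ofReal (c⁻¹ ^ ((M : ℝ) - 1)) * gammaPDF (M : ℝ) 1 y := by
        gcongr with y
        exact gammaPDF_scale_le M hM hc hc1 y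
    _ = ENNReal.ofReal c⁻¹ * (ENNReal.ofReal (c⁻¹ ^ ((M : ℝ) - 1)) *
          ∫⁻ y in s, gammaPDF (M : ℝ) 1 y) := by
        rw [lintegral_const_mul _ hpdf]
    _ = ((ENNReal.ofReal ((1 / c) ^ M)) • gammaMeasure (M : ℝ) 1) s := by
        rw [← mul_assoc, ← ENNReal.ofReal_mul (by positivity),
          Measure.smul_apply, smul_eq_mul, gammaMeasure, withDensity_apply _ hs]
        congr 2
        have h5 : (0:ℝ) < c⁻¹ := inv_pos.2 hc
        calc c⁻¹ * c⁻¹ ^ ((M:ℝ) - 1)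
            = c⁻¹ ^ (1:ℝ) * c⁻¹ ^ ((M:ℝ) - 1) := by rw [Real.rpow_one]
          _ = c⁻¹ ^ ((1:ℝ) + ((M:ℝ) - 1)) := (Real.rpow_add h5 _ _).symm
          _ = c⁻¹ ^ ((M:ℝ)) := by norm_num
          _ = (1 / c) ^ M := by rw [Real.rpow_natCast, one_div]

theorem outage_bound_miso
    (n : ℕ) (hn : 1 ≤ n) (M : ℕ) (hM : 1 ≤ M)
    (L : Fin n → ℝ) (hL : ∀ i, 0 < L i)
    (S t P : ℝ) (hS : 0 < S) (ht : 0 < t) (hP : 0 < P)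
    (p : Fin n → ℝ) (hp : ∀ i, 0 < p i) (hpP : ∀ i, p i ≤ P)
    (μ : Measure (Fin n → ℝ))
    (hμ : μ = Measure.pi fun _ : Fin n => gammaMeasure (M : ℝ) 1) :
    μ {lam : Fin n → ℝ | ∑ i, L i * Real.logb 2 (1 + S * lam i * p i) < t}
      ≤ ENNReal.ofReal (∏ i, (P / p i) ^ M) *
        μ {lam : Fin n → ℝ | ∑ i, L i * Real.logb 2 (1 + S * lam i * P) < t} := by
  subst hμ
  set γ := gammaMeasure (M : ℝ) 1 with hγ
  haveI : IsProbabilityMeasure γ :=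
    isProbabilityMeasure_gammaMeasure (by positivity) one_pos
  set c : Fin n → ℝ := fun i => p i / P with hc
  have hc0 : ∀ i, 0 < c i := fun i => div_pos (hp i) hP
  have hc1 : ∀ i, c i ≤ 1 := fun i => (div_le_one hP).2 (hpP i)
  set g : (Fin n → ℝ) → (Fin n → ℝ) := fun x i => x i * c i with hg
  have hgmeas : Measurable g :=
    measurable_pi_lambda _ fun i => (measurable_pi_apply i).mul_const _
  set B := {lam : Fin n → ℝ | ∑ i, L i * Real.logb 2 (1 + S * lam i * P) < t} with hB
  have hBmeas : MeasurableSet B := by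
    have : Measurable fun lam : Fin n → ℝ =>
        ∑ i, L i * Real.logb 2 (1 + S * lam i * P) := by
      refine Finset.measurable_sum _ fun i _ => ?_
      simp_rw [Real.logb]
      have hb : Measurable fun lam : Fin n → ℝ => 1 + S * lam i * P := by
        measurability
      exact ((Real.measurable_log.comp hb).div_const _).const_mul _
    exact measurableSet_lt this measurable_const
  have hA : {lam : Fin n → ℝ | ∑ i, L i * Real.logb 2 (1 + S * lam i * p i) < t}
      = g ⁻¹' B := by
    ext lam
    simp only [Set.mem_setOf_eq, Set.mem_preimage, hB, hg]
    have : ∀ i, S * (lam i * c i) * P = S * lam i * p i := by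
      intro i
      rw [hc]
      field_simp
    rw [show (∑ i, L i * Real.logb 2 (1 + S * (lam i * c i) * P))
        = ∑ i, L i * Real.logb 2 (1 + S * lam i * p i) by
      refine Finset.sum_congr rfl fun i _ => ?_
      rw [this i]]
  set K : Fin n → ℝ≥0∞ := fun i => ENNReal.ofReal ((1 / c i) ^ M) with hK
  have hmap : (Measure.pi fun _ : Fin n => γ).map g
      = Measure.pi fun i => γ.map (· * c i) := by
    haveI : ∀ i : Fin n, SigmaFinite (γ.map (· * c i)) := by
      intro i
      haveI : IsProbabilityMeasure (γ.map (· * c i)) :=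
        Measure.isProbabilityMeasure_map (measurable_mul_const (c i)).aemeasurable
      infer_instance
    refine (Measure.pi_eq fun s hs => ?_).symm
    rw [Measure.map_apply hgmeas (MeasurableSet.univ_pi hs)]
    have : g ⁻¹' Set.pi Set.univ s = Set.pi Set.univ fun i => (· * c i) ⁻¹' s i := by
      ext x
      simp [hg, Set.mem_pi]
    rw [this, Measure.pi_pi]
    exact Finset.prod_congr rfl fun i _ =>
      (Measure.map_apply (measurable_mul_const (c i)) (hs i)).symm
  have hle : Measure.pi (fun i => γ.map (· * c i)) ≤ Measure.pi (fun i => K i • γ) :=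
    pi_measure_mono fun i => map_mul_gammaMeasure_le M hM (hc0 i) (hc1 i)
  have hsmul : Measure.pi (fun i => K i • γ) = (∏ i, K i) • Measure.pi fun _ : Fin n => γ :=
    pi_smul_eq _ K fun i => ENNReal.ofReal_ne_top
  calc (Measure.pi fun _ : Fin n => γ)
        {lam : Fin n → ℝ | ∑ i, L i * Real.logb 2 (1 + S * lam i * p i) < t}
      = (Measure.pi fun _ : Fin n => γ) (g ⁻¹' B) := by rw [hA]
    _ = ((Measure.pi fun _ : Fin n => γ).map g) B := (Measure.map_apply hgmeas hBmeas).symm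
    _ = Measure.pi (fun i => γ.map (· * c i)) B := by rw [hmap]
    _ ≤ Measure.pi (fun i => K i • γ) B := Measure.le_iff.1 hle B hBmeas
    _ = (∏ i, K i) * (Measure.pi fun _ : Fin n => γ) B := by
        rw [hsmul, Measure.smul_apply, smul_eq_mul]
    _ = ENNReal.ofReal (∏ i, (P / p i) ^ M) *
          (Measure.pi fun _ : Fin n => γ) B := by
        congr 1
        rw [hK, ← ENNReal.ofReal_prod_of_nonneg fun i _ =>
          pow_nonneg (one_div_nonneg.2 (hc0 i).le) M]
        refine congrArg _ (Finset.prod_congr rfl fun i _ => ?_)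
        rw [hc, one_div_div]
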